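/- For every integer n ≥ 1 and every ε with 0 < ε < 1, the function f : ℂ^n → ℝ given by f(z) = 1 / ( |ln|z_1| + … + ln|z_n||^n · ∏_{i=1}^n |z_i|^2 ) is NOT integrable (with respect to Lebesgue measure on ℂ^n) on the ball { z ∈ ℂ^n : ‖z‖ < ε }. -/

import Mathlib

open MeasureTheory Real
open scoped ENNReal


lemma harmonic_shift (A : ℝ) (hA : 1 ≤ A) :
    ∑' j : ℕ, ENNReal.ofReal (1 / (A + j)) = ⊤ := by
  have h0 : ∀ j : ℕ, (0:ℝ) < A + j := fun j => by positivity
  rw [show (fun j : ℕ => ENNReal.ofReal (1 / (A + j))) =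
      fun j : ℕ => ((1 / (A + j)).toNNReal : ℝ≥0∞) from rfl] at *
  rw [ENNReal.tsum_coe_eq_top_iff_not_summable_coe]
  intro hs
  have hs' : Summable fun j : ℕ => (1 / (A + j) : ℝ) := by
    refine hs.congr fun j => ?_
    exact Real.coe_toNNReal _ (by positivity)
  have : Summable fun j : ℕ => (1 / (1 + j) : ℝ) := by
    refine Summable.of_nonneg_of_le (fun j => by positivity) (fun j => ?_) (hs'.mul_left A)
    rw [mul_one_div, div_le_div_iff₀ (by positivity) (h0 j)]
    nlinarith [Nat.cast_nonneg (α := ℝ) j]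
  have h2 : Summable fun j : ℕ => (1 / (j : ℝ)) := by
    rw [← summable_nat_add_iff 1]
    exact this.congr fun j => by push_cast; ring_nf
  exact Real.not_summable_one_div_natCast h2

lemma key_tsum (m : ℕ) (hm : 1 ≤ m) (A : ℝ) (hA : 1 ≤ A) :
    ∑' k : Fin m → ℕ, ENNReal.ofReal (1 / (A + ∑ i, (k i : ℝ)) ^ m) = ⊤ := by
  induction m, hm using Nat.le_induction generalizing A with
  | base =>
    rw [← (Fin.consEquiv (fun _ : Fin 1 => ℕ)).tsum_eq]
    have he : ∀ p : ℕ × (Fin 0 → ℕ),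
        ENNReal.ofReal (1 / (A + ∑ i, ((Fin.consEquiv (fun _ : Fin 1 => ℕ)) p i : ℝ)) ^ 1)
          = ENNReal.ofReal (1 / (A + p.1)) := by
      intro p
      simp [Fin.consEquiv, pow_one]
    rw [tsum_congr he, ENNReal.tsum_prod']
    have : ∀ j : ℕ, ∑' _t : Fin 0 → ℕ, ENNReal.ofReal (1 / (A + j)) =
        ENNReal.ofReal (1 / (A + j)) := by
      intro j
      exact tsum_eq_single default fun b hb => absurd (Subsingleton.elim b default) hb
    rw [tsum_congr this]
    exact harmonic_shift A hA
  | succ m hm ih =>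
    rw [← (Fin.consEquiv (fun _ : Fin (m+1) => ℕ)).tsum_eq]
    have he : ∀ p : ℕ × (Fin m → ℕ),
        ENNReal.ofReal (1 / (A + ∑ i, ((Fin.consEquiv (fun _ : Fin (m+1) => ℕ)) p i : ℝ)) ^ (m+1))
          = ENNReal.ofReal (1 / ((A + ∑ i, (p.2 i : ℝ)) + p.1) ^ (m+1)) := by
      intro p
      have hsum : (∑ i : Fin (m+1), (((Fin.consEquiv (fun _ : Fin (m+1) => ℕ)) p) i : ℝ))
          = (p.1 : ℝ) + ∑ i, (p.2 i : ℝ) := by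
        simp only [Fin.consEquiv_apply]
        rw [← Nat.cast_sum, Fin.sum_cons]
        push_cast
        ring
      rw [hsum, show A + ((p.1:ℝ) + ∑ i, (p.2 i:ℝ)) = (A + ∑ i, (p.2 i:ℝ)) + p.1 from by ring]
    rw [tsum_congr he, ENNReal.tsum_prod', ENNReal.tsum_comm]
    -- now goal: ∑' t, ∑' j, ofReal (1/((A + ∑ t) + j)^(m+1)) = ⊤
    have hinner : ∀ t : Fin m → ℕ,
        ENNReal.ofReal ((1/2) ^ (m+1)) * ENNReal.ofReal (1 / (A + ∑ i, (t i : ℝ)) ^ m) ≤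
        ∑' j : ℕ, ENNReal.ofReal (1 / ((A + ∑ i, (t i : ℝ)) + j) ^ (m+1)) := by
      intro t
      set B : ℝ := A + ∑ i, (t i : ℝ) with hB
      have hB1 : 1 ≤ B := le_add_of_le_of_nonneg hA (by positivity)
      have hB0 : 0 < B := lt_of_lt_of_le one_pos hB1
      set N : ℕ := ⌈B⌉₊ with hN
      have hNB : B ≤ N := Nat.le_ceil B
      have hterm : ∀ j ∈ Finset.range N,
          ENNReal.ofReal (1 / (2*B) ^ (m+1)) ≤ ENNReal.ofReal (1 / (B + j) ^ (m+1)) := by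
        intro j hj
        apply ENNReal.ofReal_le_ofReal
        apply one_div_le_one_div_of_le (by positivity)
        apply pow_le_pow_left₀ (by positivity)
        have : (j : ℝ) ≤ N - 1 := by
          have := Finset.mem_range.1 hj
          have : (j : ℝ) + 1 ≤ N := by exact_mod_cast this
          linarith
        have hN1 : (N : ℝ) ≤ B + 1 := by
          calc (N:ℝ) = ⌈B⌉₊ := rfl
          _ ≤ B + 1 := (Nat.ceil_lt_add_one hB0.le).le
        linarith
      calc ENNReal.ofReal ((1/2) ^ (m+1)) * ENNReal.ofReal (1 / B ^ m)
          = ENNReal.ofReal ((1/2)^(m+1) * (1 / B ^ m)) := by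
            rw [ENNReal.ofReal_mul (by positivity)]
        _ ≤ ENNReal.ofReal (N * (1 / (2*B) ^ (m+1))) := by
            apply ENNReal.ofReal_le_ofReal
            have h1 : ((1:ℝ)/2)^(m+1) * (1/B^m) = 1 / (2^(m+1) * B^m) := by
              rw [div_pow, one_pow]; field_simp
            have h2 : (N:ℝ) * (1/(2*B)^(m+1)) = N / (2^(m+1) * B^(m+1)) := by
              rw [mul_pow]; field_simp
            rw [h1, h2, div_le_div_iff₀ (by positivity) (by positivity)]
            calc (1:ℝ) * (2^(m+1) * B^(m+1)) = (2^(m+1) * B^m) * B := by rw [pow_succ]; ring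
            _ ≤ (2^(m+1) * B^m) * N := mul_le_mul_of_nonneg_left hNB (by positivity)
            _ = (N:ℝ) * (2^(m+1) * B^m) := by ring
        _ = ∑ _j ∈ Finset.range N, ENNReal.ofReal (1 / (2*B) ^ (m+1)) := by
            rw [Finset.sum_const, nsmul_eq_mul]
            rw [ENNReal.ofReal_mul (by positivity : (0:ℝ) ≤ (N:ℝ))]
            congr 1
            simp
        _ ≤ ∑ j ∈ Finset.range N, ENNReal.ofReal (1 / (B + j) ^ (m+1)) :=
            Finset.sum_le_sum hterm
        _ ≤ ∑' j : ℕ, ENNReal.ofReal (1 / (B + j) ^ (m+1)) := ENNReal.sum_le_tsum _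
    have : (⊤ : ℝ≥0∞) ≤ ∑' (t : Fin m → ℕ) (j : ℕ),
        ENNReal.ofReal (1 / ((A + ∑ i, (t i : ℝ)) + j) ^ (m+1)) := by
      calc (⊤:ℝ≥0∞) = ENNReal.ofReal ((1/2)^(m+1)) *
            ∑' t : Fin m → ℕ, ENNReal.ofReal (1 / (A + ∑ i, (t i : ℝ)) ^ m) := by
            rw [ih A hA, ENNReal.mul_top (by rw [Ne, ENNReal.ofReal_eq_zero, not_le]; positivity)]
        _ = ∑' t : Fin m → ℕ, ENNReal.ofReal ((1/2)^(m+1)) *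
              ENNReal.ofReal (1 / (A + ∑ i, (t i : ℝ)) ^ m) := ENNReal.tsum_mul_left.symm
        _ ≤ _ := ENNReal.tsum_le_tsum hinner
    exact top_le_iff.1 this

noncomputable def annZ (m : ℕ) : Set ℂ :=
  Metric.ball 0 (Real.exp (-(m:ℝ))) \ Metric.closedBall 0 (Real.exp (-(m:ℝ) - 1))

lemma mem_annZ {m : ℕ} {w : ℂ} :
    w ∈ annZ m ↔ Real.exp (-(m:ℝ) - 1) < ‖w‖ ∧ ‖w‖ < Real.exp (-(m:ℝ)) := by
  simp only [annZ, Set.mem_diff, Metric.mem_ball, Metric.mem_closedBall, Complex.dist_eq,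
    sub_zero, not_le]
  tauto

lemma measurable_annZ (m : ℕ) : MeasurableSet (annZ m) :=
  measurableSet_ball.diff measurableSet_closedBall

lemma volume_annZ (m : ℕ) :
    volume (annZ m) = ENNReal.ofReal ((π * (1 - Real.exp (-2))) * Real.exp (-(2 * (m:ℝ)))) := by
  have hsub : Metric.closedBall (0:ℂ) (Real.exp (-(m:ℝ) - 1)) ⊆
      Metric.ball (0:ℂ) (Real.exp (-(m:ℝ))) :=
    Metric.closedBall_subset_ball (Real.exp_lt_exp.2 (by linarith))
  rw [annZ, measure_diff hsub measurableSet_closedBall.nullMeasurableSet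
      (by rw [Complex.volume_closedBall]; exact ENNReal.mul_ne_top (by simp) ENNReal.coe_ne_top),
    Complex.volume_ball, Complex.volume_closedBall]
  have hpi : (NNReal.pi : ℝ≥0∞) = ENNReal.ofReal π := by
    rw [← ENNReal.ofReal_coe_nnreal, NNReal.coe_real_pi]
  rw [hpi, ← ENNReal.ofReal_pow (Real.exp_nonneg _), ← ENNReal.ofReal_pow (Real.exp_nonneg _),
    ← ENNReal.ofReal_mul (by positivity), ← ENNReal.ofReal_mul (by positivity),
    ← ENNReal.ofReal_sub _ (by positivity)]
  congr 1
  have h1 : Real.exp (-(m:ℝ)) ^ 2 = Real.exp (-(2*(m:ℝ))) := by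
    rw [sq, ← Real.exp_add]; ring_nf
  have h2 : Real.exp (-(m:ℝ) - 1) ^ 2 = Real.exp (-(2*(m:ℝ))) * Real.exp (-2) := by
    rw [sq, ← Real.exp_add, ← Real.exp_add]; ring_nf
  rw [h1, h2]; ring

/-- Lemma 3.1(ii), divergence at `s = n`: the function
`z ↦ 1 / (|∑ i, ln |z_i||^n · ∏ i, |z_i|²)` is not integrable on any small ball in `ℂⁿ`. -/
theorem stmt_3 (n : ℕ) (hn : 1 ≤ n) (ε : ℝ) (hε0 : 0 < ε) (hε1 : ε < 1) :
    ¬ IntegrableOn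
      (fun z : Fin n → ℂ =>
        1 / (|∑ i, Real.log (‖z i‖)| ^ n * ∏ i, ‖z i‖ ^ 2))
      (Metric.ball 0 ε) := by
  intro h
  set f : (Fin n → ℂ) → ℝ := fun z =>
    1 / (|∑ i, Real.log (‖z i‖)| ^ n * ∏ i, ‖z i‖ ^ 2) with hf
  -- choose K0 with exp(-K0) < ε and K0 ≥ 1
  set K0 : ℕ := ⌈-Real.log ε⌉₊ + 1 with hK0def
  have hK0e : Real.exp (-(K0:ℝ)) < ε := by
    have h1 : -Real.log ε ≤ (⌈-Real.log ε⌉₊ : ℝ) := Nat.le_ceil _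
    have h2 : Real.log ε < -(⌈-Real.log ε⌉₊ : ℝ) + 1 ∨ True := Or.inr trivial
    have : -(K0:ℝ) < Real.log ε := by
      push_cast [hK0def]; linarith
    calc Real.exp (-(K0:ℝ)) < Real.exp (Real.log ε) := Real.exp_lt_exp.2 this
    _ = ε := Real.exp_log hε0
  have hK01 : 1 ≤ K0 := Nat.le_add_left 1 _
  -- the boxes
  set A : (Fin n → ℕ) → Set (Fin n → ℂ) :=
    fun k => Set.pi Set.univ fun i => annZ (k i + K0) with hA
  have hmemA : ∀ (k) (z : Fin n → ℂ), z ∈ A k ↔ ∀ i,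
      Real.exp (-((k i + K0 : ℕ):ℝ) - 1) < ‖z i‖ ∧
      ‖z i‖ < Real.exp (-((k i + K0 : ℕ):ℝ)) := by
    intro k z
    simp only [hA, Set.mem_pi, Set.mem_univ, forall_true_left, mem_annZ]
  -- boxes inside the ball
  have hsub : ∀ k, A k ⊆ Metric.ball (0 : Fin n → ℂ) ε := by
    intro k z hz
    rw [Metric.mem_ball, dist_pi_lt_iff hε0]
    intro i
    have h1 := ((hmemA k z).1 hz i).2
    have h2 : Real.exp (-((k i + K0 : ℕ):ℝ)) ≤ Real.exp (-(K0:ℝ)) := by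
      apply Real.exp_le_exp.2
      have hk : (K0:ℝ) ≤ ((k i + K0:ℕ):ℝ) := by exact_mod_cast Nat.le_add_left K0 (k i)
      linarith
    calc dist (z i) 0 = ‖z i‖ := by rw [Complex.dist_eq, sub_zero]
    _ < Real.exp (-((k i + K0 : ℕ):ℝ)) := h1
    _ ≤ Real.exp (-(K0:ℝ)) := h2
    _ < ε := hK0e
  have hmeasA : ∀ k, MeasurableSet (A k) := fun k =>
    MeasurableSet.univ_pi fun i => measurable_annZ _
  have hdisA : Pairwise (Function.onFun Disjoint A) := by
    intro k k' hkk'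
    obtain ⟨i, hi⟩ : ∃ i, k i ≠ k' i := Function.ne_iff.1 hkk'
    rw [Function.onFun, Set.disjoint_left]
    intro z hz hz'
    have h1 := (hmemA k z).1 hz i
    have h2 := (hmemA k' z).1 hz' i
    rcases lt_or_gt_of_ne hi with hlt | hlt
    · have : (k i + K0 : ℕ) + 1 ≤ (k' i + K0 : ℕ) := by omega
      have hle : Real.exp (-((k' i + K0 : ℕ):ℝ)) ≤ Real.exp (-((k i + K0 : ℕ):ℝ) - 1) := by
        apply Real.exp_le_exp.2
        have : ((k i + K0 : ℕ):ℝ) + 1 ≤ ((k' i + K0 : ℕ):ℝ) := by exact_mod_cast this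
        linarith
      exact absurd (h2.2.trans_le (hle.trans h1.1.le)) (lt_irrefl _)
    · have : (k' i + K0 : ℕ) + 1 ≤ (k i + K0 : ℕ) := by omega
      have hle : Real.exp (-((k i + K0 : ℕ):ℝ)) ≤ Real.exp (-((k' i + K0 : ℕ):ℝ) - 1) := by
        apply Real.exp_le_exp.2
        have : ((k' i + K0 : ℕ):ℝ) + 1 ≤ ((k i + K0 : ℕ):ℝ) := by exact_mod_cast this
        linarith
      exact absurd (h1.2.trans_le (hle.trans h2.1.le)) (lt_irrefl _)
  -- constants
  set Cc : ℝ := π * (1 - Real.exp (-2)) with hCc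
  have hCcpos : 0 < Cc := by
    have : Real.exp (-2) < 1 := Real.exp_lt_one_iff.2 (by norm_num)
    have := Real.pi_pos
    nlinarith
  set A0 : ℝ := (n:ℝ) * (K0:ℝ) + n with hA0
  have hA01 : 1 ≤ A0 := by
    have h1 : (1:ℝ) ≤ n := by exact_mod_cast hn
    have h2 : (1:ℝ) ≤ K0 := by exact_mod_cast hK01
    nlinarith
  -- key lower bound per box
  have hlow : ∀ k : Fin n → ℕ,
      ENNReal.ofReal (Cc ^ n) * ENNReal.ofReal (1 / (A0 + ∑ i, (k i : ℝ)) ^ n) ≤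
      ∫⁻ z in A k, (‖f z‖₊ : ℝ≥0∞) := by
    intro k
    set M : ℝ := ∑ i, ((k i + K0 : ℕ) : ℝ) with hM
    have hMA0 : M + n = A0 + ∑ i, (k i : ℝ) := by
      have hM' : M = (∑ i, (k i:ℝ)) + n * K0 := by
        rw [hM]
        push_cast
        rw [Finset.sum_add_distrib]
        simp [Finset.sum_const, Finset.card_univ, nsmul_eq_mul]
      rw [hM', hA0]
      ring
    have hM1 : (1:ℝ) ≤ M := by
      have : ∀ i : Fin n, (1:ℝ) ≤ ((k i + K0 : ℕ) : ℝ) := by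
        intro i
        have : 1 ≤ k i + K0 := by omega
        exact_mod_cast this
      calc (1:ℝ) ≤ (n:ℝ) := by exact_mod_cast hn
      _ = ∑ _i : Fin n, (1:ℝ) := by simp
      _ ≤ M := Finset.sum_le_sum fun i _ => this i
    -- pointwise bound on the box
    have hpt : ∀ z ∈ A k, ENNReal.ofReal (Real.exp (2*M) / (M + n) ^ n) ≤ (‖f z‖₊ : ℝ≥0∞) := by
      intro z hz
      have hz' := (hmemA k z).1 hz
      have hapos : ∀ i, 0 < ‖z i‖ := fun i =>
        lt_trans (Real.exp_pos _) (hz' i).1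
      have hlogU : ∀ i, Real.log (‖z i‖) < -((k i + K0 : ℕ):ℝ) := by
        intro i
        calc Real.log (‖z i‖) < Real.log (Real.exp (-((k i + K0:ℕ):ℝ))) :=
          Real.log_lt_log (hapos i) (hz' i).2
        _ = -((k i + K0:ℕ):ℝ) := Real.log_exp _
      have hlogL : ∀ i, -((k i + K0 : ℕ):ℝ) - 1 < Real.log (‖z i‖) := by
        intro i
        calc -((k i + K0:ℕ):ℝ) - 1 = Real.log (Real.exp (-((k i + K0:ℕ):ℝ) - 1)) :=
          (Real.log_exp _).symm
        _ < Real.log (‖z i‖) := Real.log_lt_log (Real.exp_pos _) (hz' i).1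
      set S : ℝ := ∑ i, Real.log (‖z i‖) with hS
      have hSU : S ≤ -M := by
        rw [hM, ← Finset.sum_neg_distrib]
        exact Finset.sum_le_sum fun i _ => (hlogU i).le
      have hSL : -(M + n) ≤ S := by
        have : ∑ i : Fin n, (-((k i + K0:ℕ):ℝ) - 1) ≤ S :=
          Finset.sum_le_sum fun i _ => (hlogL i).le
        have heq : ∑ i : Fin n, (-((k i + K0:ℕ):ℝ) - 1) = -M - n := by
          rw [hM, Finset.sum_sub_distrib, Finset.sum_neg_distrib]
          simp [Finset.sum_const, Finset.card_univ]
        rw [heq] at this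
        linarith
      have habsS : |S| ≤ M + n := abs_le.2 ⟨hSL, by linarith [Nat.cast_nonneg (α := ℝ) n]⟩
      have habsSpos : 0 < |S| := lt_of_lt_of_le one_pos (le_abs.2 (Or.inr (by linarith)))
      set P : ℝ := ∏ i, ‖z i‖ ^ 2 with hP
      have hPpos : 0 < P := Finset.prod_pos fun i _ => pow_pos (hapos i) 2
      have hPU : P ≤ Real.exp (-(2*M)) := by
        have h1 : P ≤ ∏ i, Real.exp (-((k i + K0:ℕ):ℝ)) ^ 2 := by
          apply Finset.prod_le_prod (fun i _ => by positivity)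
          intro i _
          exact pow_le_pow_left₀ (norm_nonneg _) (hz' i).2.le 2
        have h2 : ∏ i, Real.exp (-((k i + K0:ℕ):ℝ)) ^ 2 = Real.exp (-(2*M)) := by
          have : ∀ i : Fin n, Real.exp (-((k i + K0:ℕ):ℝ)) ^ 2 =
              Real.exp (-(2 * ((k i + K0:ℕ):ℝ))) := by
            intro i
            rw [sq, ← Real.exp_add]
            ring_nf
          rw [Finset.prod_congr rfl fun i _ => this i, ← Real.exp_sum]
          congr 1
          rw [hM, Finset.mul_sum, ← Finset.sum_neg_distrib]
        rw [← h2]; exact h1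
      -- denominator bounds
      have hDU : |S| ^ n * P ≤ (M + n) ^ n * Real.exp (-(2*M)) := by
        apply mul_le_mul (pow_le_pow_left₀ (abs_nonneg _) habsS n) hPU hPpos.le
        positivity
      have hDpos : 0 < |S| ^ n * P := by positivity
      have hfz : Real.exp (2*M) / (M + n) ^ n ≤ f z := by
        have h1 : 1 / ((M + n) ^ n * Real.exp (-(2*M))) ≤ 1 / (|S| ^ n * P) :=
          one_div_le_one_div_of_le hDpos hDU
        have h2 : Real.exp (2*M) / (M + n) ^ n = 1 / ((M + n) ^ n * Real.exp (-(2*M))) := by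
          have hQ : (M + (n:ℝ)) ^ n ≠ 0 := by positivity
          rw [Real.exp_neg]
          field_simp
        show Real.exp (2*M) / (M + n) ^ n ≤ 1 / (|S| ^ n * P)
        rw [h2]
        exact h1
      have hfznn0 : (0:ℝ) < Real.exp (2*M) / (M + n) ^ n := by positivity
      have hfznn : 0 ≤ f z := le_trans hfznn0.le hfz
      calc ENNReal.ofReal (Real.exp (2*M) / (M + n) ^ n) ≤ ENNReal.ofReal (f z) :=
        ENNReal.ofReal_le_ofReal hfz
      _ = (‖f z‖₊ : ℝ≥0∞) := (Real.enorm_eq_ofReal hfznn).symm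
    -- volume of the box
    have hvol : volume (A k) = ENNReal.ofReal (Cc ^ n * Real.exp (-(2*M))) := by
      rw [hA]
      rw [volume_pi_pi]
      have : ∀ i : Fin n, volume (annZ (k i + K0)) =
          ENNReal.ofReal (Cc * Real.exp (-(2 * ((k i + K0:ℕ):ℝ)))) := fun i => volume_annZ _
      rw [Finset.prod_congr rfl fun i _ => this i,
        ← ENNReal.ofReal_prod_of_nonneg (fun i _ => by positivity)]
      congr 1
      rw [Finset.prod_mul_distrib, Finset.prod_const, Finset.card_univ, ← Real.exp_sum]
      congr 1
      · simp
      · rw [hM, Finset.mul_sum, ← Finset.sum_neg_distrib]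
    -- put together
    calc ENNReal.ofReal (Cc ^ n) * ENNReal.ofReal (1 / (A0 + ∑ i, (k i : ℝ)) ^ n)
        = ENNReal.ofReal (Real.exp (2*M) / (M + n) ^ n) *
            ENNReal.ofReal (Cc ^ n * Real.exp (-(2*M))) := by
          rw [← ENNReal.ofReal_mul (by positivity), ← ENNReal.ofReal_mul (by positivity)]
          congr 1
          rw [← hMA0]
          have h1 : Real.exp (2*M) * Real.exp (-(2*M)) = 1 := by
            rw [← Real.exp_add]; simp
          calc Cc ^ n * (1 / (M + n) ^ n)
              = Cc ^ n * (Real.exp (2*M) * Real.exp (-(2*M))) / (M + n) ^ n := by rw [h1]; ring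
          _ = Real.exp (2*M) / (M + n) ^ n * (Cc ^ n * Real.exp (-(2*M))) := by ring
      _ = ENNReal.ofReal (Real.exp (2*M) / (M + n) ^ n) * volume (A k) := by rw [hvol]
      _ = ∫⁻ _z in A k, ENNReal.ofReal (Real.exp (2*M) / (M + n) ^ n) :=
          (setLIntegral_const _ _).symm
      _ ≤ ∫⁻ z in A k, (‖f z‖₊ : ℝ≥0∞) := setLIntegral_mono' (hmeasA k) hpt
  -- sum over all boxes
  have htop : (∫⁻ z in Metric.ball (0 : Fin n → ℂ) ε, (‖f z‖₊ : ℝ≥0∞)) = ⊤ := by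
    rw [eq_top_iff]
    calc (⊤:ℝ≥0∞) = ENNReal.ofReal (Cc ^ n) *
          ∑' k : Fin n → ℕ, ENNReal.ofReal (1 / (A0 + ∑ i, (k i : ℝ)) ^ n) := by
          rw [key_tsum n hn A0 hA01,
            ENNReal.mul_top (by rw [Ne, ENNReal.ofReal_eq_zero, not_le]; positivity)]
      _ = ∑' k : Fin n → ℕ, ENNReal.ofReal (Cc ^ n) *
            ENNReal.ofReal (1 / (A0 + ∑ i, (k i : ℝ)) ^ n) := ENNReal.tsum_mul_left.symm
      _ ≤ ∑' k : Fin n → ℕ, ∫⁻ z in A k, (‖f z‖₊ : ℝ≥0∞) := ENNReal.tsum_le_tsum hlow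
      _ = ∫⁻ z in ⋃ k, A k, (‖f z‖₊ : ℝ≥0∞) := (lintegral_iUnion hmeasA hdisA _).symm
      _ ≤ ∫⁻ z in Metric.ball (0 : Fin n → ℂ) ε, (‖f z‖₊ : ℝ≥0∞) :=
          lintegral_mono_set (Set.iUnion_subset hsub)
  have hfin : (∫⁻ z in Metric.ball (0 : Fin n → ℂ) ε, (‖f z‖₊ : ℝ≥0∞)) < ⊤ :=
    h.hasFiniteIntegral
  rw [htop] at hfin
  exact lt_irrefl _ hfin
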